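/- The cokernel of the endomorphism ρ(s) - id : ℤ^n → ℤ^n is isomorphic as an abelian group to (ℤ/p)^k. -/

import Mathlib

open Matrix Polynomial Finset


lemma card_quot_eq_natAbs_det {n : ℕ} (B : Matrix (Fin n) (Fin n) ℤ)
    (hinj : Function.Injective B.mulVecLin) :
    Nat.card ((Fin n → ℤ) ⧸ LinearMap.range B.mulVecLin) = B.det.natAbs := by
  classical
  set N := LinearMap.range B.mulVecLin with hN
  obtain ⟨m, snf⟩ := N.smithNormalForm (Pi.basisFun ℤ (Fin n))
  have hm : m = n := by
    have e : (Fin n → ℤ) ≃ₗ[ℤ] N := LinearEquiv.ofInjective _ hinj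
    simpa using card_eq_of_linearEquiv ℤ (snf.bN.equivFun.symm.trans (e.symm.trans (LinearEquiv.refl ℤ _)))
  subst hm
  change N.toAddSubgroup.index = _
  rw [snf.toAddSubgroup_index_eq_ite, if_pos (by simp)]
  have hidx : ∀ i, (Ideal.span {snf.a i}).toAddSubgroup.index = (snf.a i).natAbs := fun i => by
    rw [Ideal.span_singleton_toAddSubgroup_eq_zmultiples, Int.index_zmultiples]
  rw [Finset.prod_congr rfl fun i _ => hidx i]
  -- determinant side
  have hf0 : Function.Bijective snf.f := Finite.injective_iff_bijective.mp snf.f.injective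
  set e0 : Fin m ≃ Fin m := Equiv.ofBijective snf.f hf0 with he0
  set u : (Fin m → ℤ) ≃ₗ[ℤ] N := snf.bM.equiv snf.bN e0.symm with hu
  set g : (Fin m → ℤ) →ₗ[ℤ] (Fin m → ℤ) := N.subtype ∘ₗ (u : (Fin m → ℤ) →ₗ[ℤ] N) with hg
  have hge : ∀ i, g (snf.bM i) = snf.a (e0.symm i) • snf.bM i := by
    intro i
    have h1 : ((snf.bN (e0.symm i) : N) : Fin m → ℤ)
        = snf.a (e0.symm i) • snf.bM (snf.f (e0.symm i)) := snf.snf _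
    have h2 : snf.f (e0.symm i) = i := e0.apply_symm_apply i
    calc g (snf.bM i) = ((snf.bM.equiv snf.bN e0.symm) (snf.bM i) : Fin m → ℤ) := rfl
      _ = (snf.bN (e0.symm i) : Fin m → ℤ) := by rw [Module.Basis.equiv_apply]
      _ = snf.a (e0.symm i) • snf.bM i := by rw [h1, h2]
  have hdet_g : LinearMap.det g = ∏ i, snf.a (e0.symm i) := by
    rw [← LinearMap.det_toMatrix snf.bM]
    have hmat : LinearMap.toMatrix snf.bM snf.bM g
        = Matrix.diagonal (fun i => snf.a (e0.symm i)) := by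
      ext i j
      rw [LinearMap.toMatrix_apply, hge, LinearEquiv.map_smul, Module.Basis.repr_self,
        Finsupp.smul_single, smul_eq_mul, mul_one]
      by_cases h : i = j
      · rw [h, Matrix.diagonal_apply_eq, Finsupp.single_eq_same]
      · rw [Matrix.diagonal_apply_ne _ h, Finsupp.single_eq_of_ne h]
    rw [hmat, Matrix.det_diagonal]
  set e1 : (Fin m → ℤ) ≃ₗ[ℤ] N := LinearEquiv.ofInjective B.mulVecLin hinj with he1
  have hcomp : N.subtype ∘ₗ (e1 : (Fin m → ℤ) →ₗ[ℤ] N) = B.mulVecLin := by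
    apply LinearMap.ext; intro v
    simp only [LinearMap.comp_apply, Submodule.coe_subtype, LinearEquiv.coe_coe, he1]
    rw [LinearEquiv.ofInjective_apply]
  have hassoc : Associated (LinearMap.det B.mulVecLin) (LinearMap.det g) := by
    rw [← hcomp, hg]
    exact LinearMap.associated_det_comp_equiv _ _ _
  have hdetB : LinearMap.det B.mulVecLin = B.det := by
    rw [← Matrix.toLin'_apply', LinearMap.det_toLin']
  have hfinal : B.det.natAbs = (∏ i, snf.a (e0.symm i)).natAbs := by
    rw [← hdetB, ← hdet_g]
    exact Int.natAbs_eq_iff_associated.mpr hassoc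
  rw [hfinal]
  exact ((map_prod Int.natAbsHom _ _).trans (Equiv.prod_comp e0.symm fun i => (snf.a i).natAbs)).symm

lemma cyclo_dvd_prod_sub_p (p : ℕ) (hp : p.Prime) (hodd : Odd p) :
    (cyclotomic p ℤ) ∣ (∏ j ∈ Finset.Ico 1 p, ((X : ℤ[X]) ^ j - 1)) - C (p : ℤ) := by
  haveI : Fact p.Prime := ⟨hp⟩
  set ζ : ℂ := Complex.exp (2 * Real.pi * Complex.I / p) with hζdef
  have hζ : IsPrimitiveRoot ζ p := Complex.isPrimitiveRoot_exp p hp.ne_zero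
  -- the key numeric identity
  have hkey : ∏ j ∈ Finset.Ico 1 p, (ζ ^ j - 1) = (p : ℂ) := by
    have h1 : (X : ℂ[X]) ^ p - C 1 = ∏ i ∈ Finset.range p, (X - C (ζ ^ i * 1)) :=
      X_pow_sub_C_eq_prod hζ hp.pos (one_pow p)
    have h2 : (X : ℂ[X]) ^ p - 1 = (X - 1) * ∏ i ∈ Finset.Ico 1 p, (X - C (ζ ^ i)) := by
      simp only [mul_one] at h1
      rw [Polynomial.C_1] at h1
      rw [h1, Finset.range_eq_Ico, Finset.prod_eq_prod_Ico_succ_bot hp.pos, pow_zero,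
        Polynomial.C_1]
    have h3 : ((X : ℂ[X]) - 1) * ∑ i ∈ Finset.range p, X ^ i
        = (X - 1) * ∏ i ∈ Finset.Ico 1 p, (X - C (ζ ^ i)) := by
      rw [mul_geom_sum, h2]
    have h4 : (∑ i ∈ Finset.range p, (X : ℂ[X]) ^ i)
        = ∏ i ∈ Finset.Ico 1 p, (X - C (ζ ^ i)) :=
      mul_left_cancel₀ (X_sub_C_ne_zero 1) (by rw [Polynomial.C_1, ← h3])
    have h5 : (p : ℂ) = ∏ i ∈ Finset.Ico 1 p, (1 - ζ ^ i) := by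
      have := congrArg (Polynomial.eval 1) h4
      simpa [Polynomial.eval_prod, Polynomial.eval_geom_sum] using this
    have h6 : ∏ j ∈ Finset.Ico 1 p, (ζ ^ j - 1)
        = (-1 : ℂ) ^ (p - 1) * ∏ i ∈ Finset.Ico 1 p, (1 - ζ ^ i) := by
      rw [← Nat.card_Ico 1 p, ← Finset.prod_const ((-1 : ℂ)), ← Finset.prod_mul_distrib]
      exact Finset.prod_congr rfl fun j _ => by ring
    rw [h6, ← h5, Even.neg_one_pow (Nat.Odd.sub_odd hodd odd_one), one_mul]
  -- root of the integer polynomial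
  have hroot : (aeval ζ) ((∏ j ∈ Finset.Ico 1 p, ((X : ℤ[X]) ^ j - 1)) - C (p : ℤ)) = 0 := by
    rw [map_sub, map_prod]
    simp only [map_sub, map_pow, aeval_X, _root_.map_one, aeval_C]
    rw [hkey]
    push_cast
    ring
  -- divisibility over ℚ
  have h2 : cyclotomic p ℚ ∣ ((∏ j ∈ Finset.Ico 1 p, ((X : ℤ[X]) ^ j - 1)) - C (p : ℤ)).map
      (Int.castRingHom ℚ) := by
    rw [cyclotomic_eq_minpoly_rat hζ hp.pos]
    apply minpoly.dvd
    rw [show (Int.castRingHom ℚ) = algebraMap ℤ ℚ from rfl, aeval_map_algebraMap]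
    exact hroot
  rw [← map_cyclotomic p (Int.castRingHom ℚ)] at h2
  exact (map_dvd_map (Int.castRingHom ℚ) Int.cast_injective (cyclotomic.monic p ℤ)).mp h2

lemma detAbs_sub_one (p n k : ℕ) (hp : p.Prime) (hodd : Odd p) (hn : n = k * (p - 1))
    (A : Matrix (Fin n) (Fin n) ℤ) (hApow : A ^ p = 1)
    (hinj : ∀ v : Fin n → ℤ, (A - 1).mulVec v = 0 → v = 0) :
    ((A - 1).det).natAbs = p ^ k := by
  haveI : Fact p.Prime := ⟨hp⟩
  classical
  -- cancellation
  have hcancel : ∀ M : Matrix (Fin n) (Fin n) ℤ, (A - 1) * M = 0 → M = 0 := by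
    intro M h
    ext i j
    have h0 : (A - 1).mulVec (M.mulVec (Pi.single j 1)) = 0 := by
      rw [Matrix.mulVec_mulVec, h, Matrix.zero_mulVec]
    have := congrFun (hinj _ h0) i
    simpa [Matrix.mulVec_single] using this
  have hcancel' : ∀ M M' : Matrix (Fin n) (Fin n) ℤ, (A - 1) * M = (A - 1) * M' → M = M' := by
    intro M M' h
    have := hcancel (M - M') (by rw [mul_sub, h, sub_self])
    exact sub_eq_zero.mp this
  have hGeom : ∀ j : ℕ, (A - 1) * (∑ i ∈ Finset.range j, A ^ i) = A ^ j - 1 := fun j =>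
    mul_geom_sum A j
  have hsum : (∑ i ∈ Finset.range p, A ^ i) = 0 := by
    apply hcancel
    rw [hGeom, hApow, sub_self]
  -- each factor has the same |det|
  have hdetBj : ∀ j : ℕ, 0 < j → j < p →
      ((A ^ j - 1).det).natAbs = ((A - 1).det).natAbs := by
    intro j hj1 hjp
    have hnd : ¬ (p ∣ j) := fun h => absurd (Nat.le_of_dvd hj1 h) (not_le.mpr hjp)
    have hjz : (j : ZMod p) ≠ 0 := by
      rwa [Ne, ZMod.natCast_eq_zero_iff]
    set j' := ((j : ZMod p)⁻¹).val with hj'def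
    have hmod : (j * j') % p = 1 % p := by
      have hcast : ((j * j' : ℕ) : ZMod p) = 1 := by
        push_cast [hj'def, ZMod.natCast_val, ZMod.cast_id]
        exact mul_inv_cancel₀ hjz
      exact (ZMod.natCast_eq_natCast_iff' _ _ _).mp (by rw [hcast]; push_cast; ring)
    have hjj' : j * j' = p * ((j * j') / p) + 1 := by
      conv_lhs => rw [← Nat.div_add_mod (j * j') p]
      rw [hmod, Nat.mod_eq_of_lt hp.one_lt]
    have hAjj' : A ^ (j * j') = A := by
      rw [hjj', pow_add, pow_mul, hApow, one_pow, one_mul, pow_one]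
    set Bj := ∑ i ∈ Finset.range j, A ^ i with hBj
    set Cj := ∑ i ∈ Finset.range j', (A ^ j) ^ i with hCj
    have hprodBC : (A - 1) * (Bj * Cj) = (A - 1) * 1 := by
      rw [← mul_assoc, hGeom j, mul_one, mul_geom_sum, ← pow_mul, hAjj']
    have hBC : Bj * Cj = 1 := hcancel' _ _ hprodBC
    have hdetmul : Bj.det * Cj.det = 1 := by rw [← Matrix.det_mul, hBC, Matrix.det_one]
    have hBdet1 : Bj.det.natAbs = 1 :=
      Int.isUnit_iff_natAbs_eq.mp (IsUnit.of_mul_eq_one _ hdetmul)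
    calc ((A ^ j - 1).det).natAbs = (((A - 1) * Bj).det).natAbs := by rw [hGeom]
      _ = ((A - 1).det).natAbs * Bj.det.natAbs := by rw [Matrix.det_mul, Int.natAbs_mul]
      _ = ((A - 1).det).natAbs := by rw [hBdet1, mul_one]
  -- product identity
  have hcyc : (aeval A) (cyclotomic p ℤ) = 0 := by
    rw [Polynomial.cyclotomic_prime ℤ p, map_sum]
    simpa [Polynomial.aeval_X_pow] using hsum
  have hP : (aeval A) (∏ j ∈ Finset.Ico 1 p, ((X : ℤ[X]) ^ j - 1))
      = (p : ℤ) • (1 : Matrix (Fin n) (Fin n) ℤ) := by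
    obtain ⟨h, hh⟩ := cyclo_dvd_prod_sub_p p hp hodd
    have := congrArg (aeval A) hh
    rw [map_sub, _root_.map_mul, hcyc, zero_mul, sub_eq_zero, aeval_C] at this
    rw [this, Algebra.algebraMap_eq_smul_one]
  -- take determinants
  have hdetP : ∏ j ∈ Finset.Ico 1 p, ((A ^ j - 1).det) = (p : ℤ) ^ n := by
    let l : ℤ[X] →* ℤ := Matrix.detMonoidHom.comp ((Polynomial.aeval A).toRingHom.toMonoidHom)
    have hl : ∀ q : ℤ[X], l q = ((aeval A) q).det := fun q => rfl
    have hmap := map_prod l (fun j => ((X : ℤ[X]) ^ j - 1)) (Finset.Ico 1 p)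
    rw [hl, hP] at hmap
    have : ∏ j ∈ Finset.Ico 1 p, l ((X : ℤ[X]) ^ j - 1)
        = ∏ j ∈ Finset.Ico 1 p, ((A ^ j - 1).det) := by
      apply Finset.prod_congr rfl
      intro j _
      rw [hl, map_sub, map_pow, aeval_X, _root_.map_one]
    rw [this] at hmap
    rw [← hmap, Matrix.det_smul, Matrix.det_one, mul_one, Fintype.card_fin]
  -- conclude
  have habs : ((A - 1).det.natAbs) ^ (p - 1) = p ^ n := by
    calc ((A - 1).det.natAbs) ^ (p - 1)
        = ∏ _j ∈ Finset.Ico 1 p, ((A - 1).det.natAbs) := by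
          rw [Finset.prod_const, Nat.card_Ico]
      _ = ∏ j ∈ Finset.Ico 1 p, ((A ^ j - 1).det.natAbs) :=
          Finset.prod_congr rfl fun j hj =>
            (hdetBj j (Finset.mem_Ico.mp hj).1 (Finset.mem_Ico.mp hj).2).symm
      _ = (∏ j ∈ Finset.Ico 1 p, (A ^ j - 1).det).natAbs := (map_prod Int.natAbsHom _ _).symm
      _ = ((p : ℤ) ^ n).natAbs := by rw [hdetP]
      _ = p ^ n := by rw [Int.natAbs_pow, Int.natAbs_natCast]
  have hp1 : p - 1 ≠ 0 := by have := hp.two_le; omega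
  have hfin : ((A - 1).det.natAbs) ^ (p - 1) = (p ^ k) ^ (p - 1) := by
    rw [habs, hn, pow_mul]
  exact Nat.pow_left_injective hp1 hfin


lemma zmod_module_addEquiv (p k : ℕ) (hp : p.Prime) (G : Type) [AddCommGroup G]
    [Module (ZMod p) G] [Finite G] (hcard : Nat.card G = p ^ k) :
    Nonempty (G ≃+ (Fin k → ZMod p)) := by
  haveI : Fact p.Prime := ⟨hp⟩
  let b := Module.Free.chooseBasis (ZMod p) G
  have hc : Nat.card G = p ^ (Fintype.card (Module.Free.ChooseBasisIndex (ZMod p) G)) := by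
    rw [Nat.card_congr b.equivFun.toEquiv, Nat.card_pi]
    simp only [Nat.card_zmod, Finset.prod_const, Finset.card_univ]
  have hik : Fintype.card (Module.Free.ChooseBasisIndex (ZMod p) G) = k := by
    apply Nat.pow_right_injective hp.two_le
    show p ^ _ = p ^ k
    rw [← hc, hcard]
  refine ⟨?_⟩
  have e3 := LinearEquiv.funCongrLeft (ZMod p) (ZMod p) (Fintype.equivFinOfCardEq hik).symm
  exact (b.equivFun.trans e3).toAddEquiv

/-- The cokernel of `ρ(s) - id : ℤⁿ → ℤⁿ` is isomorphic to `(ℤ/p)^k` as an abelian group. -/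
theorem cokernel_iso (p n k : ℕ) (hp : p.Prime) (hodd : Odd p) (hk : 0 < k)
    (hn : n = k * (p - 1))
    (ρ : Multiplicative (ZMod p) →* Matrix.GeneralLinearGroup (Fin n) ℤ)
    (hfree : ∀ g : Multiplicative (ZMod p), g ≠ 1 → ∀ v : Fin n → ℤ,
      (ρ g : Matrix (Fin n) (Fin n) ℤ).mulVec v = v → v = 0)
    (s : ZMod p) (hs : addOrderOf s = p) :
    Nonempty (((Fin n → ℤ) ⧸ LinearMap.range
        (Matrix.mulVecLin
          ((ρ (Multiplicative.ofAdd s) : Matrix (Fin n) (Fin n) ℤ) - 1))) ≃+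
      (Fin k → ZMod p)) := by
  classical
  haveI : Fact p.Prime := ⟨hp⟩
  set A : Matrix (Fin n) (Fin n) ℤ := (ρ (Multiplicative.ofAdd s) : Matrix (Fin n) (Fin n) ℤ)
    with hA
  have hsne : Multiplicative.ofAdd s ≠ 1 := by
    intro h
    have hs0 : s = 0 := by simpa using h
    rw [hs0, addOrderOf_zero] at hs
    exact hp.one_lt.ne' hs.symm
  have hAinj : ∀ v : Fin n → ℤ, (A - 1).mulVec v = 0 → v = 0 := by
    intro v hv
    apply hfree (Multiplicative.ofAdd s) hsne v
    have h1 : A.mulVec v - (1 : Matrix (Fin n) (Fin n) ℤ).mulVec v = 0 := by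
      rw [← Matrix.sub_mulVec]; exact hv
    rw [Matrix.one_mulVec] at h1
    exact sub_eq_zero.mp h1
  have hApow : A ^ p = 1 := by
    have hps : p • s = 0 := addOrderOf_dvd_iff_nsmul_eq_zero.mp (by rw [hs])
    have h1 : (Multiplicative.ofAdd s) ^ p = 1 := by
      rw [← ofAdd_nsmul, hps, ofAdd_zero]
    rw [hA, ← Units.val_pow_eq_pow_val, ← map_pow, h1, _root_.map_one, Units.val_one]
  have hinj' : Function.Injective (A - 1).mulVecLin := by
    intro x y hxy
    have h0 : (A - 1).mulVec (x - y) = 0 := by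
      simp only [Matrix.mulVecLin_apply] at hxy
      rw [Matrix.mulVec_sub, hxy, sub_self]
    exact sub_eq_zero.mp (hAinj _ h0)
  have hdet : ((A - 1).det).natAbs = p ^ k := detAbs_sub_one p n k hp hodd hn A hApow hAinj
  have hcard : Nat.card ((Fin n → ℤ) ⧸ LinearMap.range (A - 1).mulVecLin) = p ^ k := by
    rw [card_quot_eq_natAbs_det _ hinj', hdet]
  -- p-torsion
  have hcancel : ∀ M : Matrix (Fin n) (Fin n) ℤ, (A - 1) * M = 0 → M = 0 := by
    intro M h
    ext i j
    have h0 : (A - 1).mulVec (M.mulVec (Pi.single j 1)) = 0 := by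
      rw [Matrix.mulVec_mulVec, h, Matrix.zero_mulVec]
    have h2 := congrFun (hAinj _ h0) i
    simpa [Matrix.mulVec_single] using h2
  have hsum : (∑ i ∈ Finset.range p, A ^ i) = 0 := by
    apply hcancel
    rw [mul_geom_sum, hApow, sub_self]
  have hC' : (A - 1) * (-(∑ i ∈ Finset.range p, ∑ l ∈ Finset.range i, A ^ l))
      = (p : ℤ) • (1 : Matrix (Fin n) (Fin n) ℤ) := by
    rw [mul_neg, Finset.mul_sum]
    rw [Finset.sum_congr rfl (fun i _ => mul_geom_sum A i)]
    rw [Finset.sum_sub_distrib, hsum, zero_sub, neg_neg, Finset.sum_const,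
      Finset.card_range, natCast_zsmul]
  set Q := (Fin n → ℤ) ⧸ LinearMap.range (A - 1).mulVecLin with hQ
  have htor : ∀ x : Q, p • x = 0 := by
    intro x
    obtain ⟨v, rfl⟩ := Submodule.Quotient.mk_surjective _ x
    have h1 : (p : ℕ) • Submodule.Quotient.mk (p := LinearMap.range (A - 1).mulVecLin) v
        = Submodule.Quotient.mk ((p : ℤ) • v) := by
      rw [← Submodule.Quotient.mk_smul, natCast_zsmul]
    rw [h1, Submodule.Quotient.mk_eq_zero]
    refine ⟨(-(∑ i ∈ Finset.range p, ∑ l ∈ Finset.range i, A ^ l)).mulVec v, ?_⟩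
    rw [Matrix.mulVecLin_apply, Matrix.mulVec_mulVec, hC', Matrix.smul_mulVec,
      Matrix.one_mulVec]
  letI : Module (ZMod p) Q := AddCommGroup.zmodModule htor
  haveI : Finite Q :=
    Nat.finite_of_card_ne_zero (by rw [hcard]; exact (pow_pos hp.pos k).ne')
  exact zmod_module_addEquiv p k hp Q hcard
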